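/- arXiv:2210.03890 — 8 statements merged into one kernel-verified Lean document; each statement's English description precedes it below -/
import Mathlib

section
/- With N ≥ 1 units, binary treatments A_i ∈ {0,1}, outcomes Y_i ∈ ℝ, M ≥ 1 matches per unit drawn from the opposite treatment group, K_M(i) the number of times unit i is used as a match, and imputed potential outcomes Ŷ_i(A_i) = Y_i and Ŷ_i(1−A_i) = (1/M)·Σ_{j ∈ 𝒥_M(i)} Y_j, the simple matching estimator of the average treatment effect satisfies the exact identity (1/N)·Σ_{i=1}^N (Ŷ_i(1) − Ŷ_i(0)) = (1/N)·Σ_{i=1}^N (2A_i − 1)·(1 + K_M(i)/M)·Y_i. -/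
open Finset

/-- The simple matching estimator of the ATE, written as the average of
imputed contrasts `Ŷᵢ(1) − Ŷᵢ(0)`, equals the weighted-outcome form
`(1/N)·Σᵢ (2Aᵢ − 1)·(1 + K_M(i)/M)·Yᵢ`. -/
theorem matching_estimator_ate_identity
    (N M : ℕ) (hN : 1 ≤ N) (hM : 1 ≤ M)
    (A : Fin N → ℕ) (hA : ∀ i, A i = 0 ∨ A i = 1)
    (Y : Fin N → ℝ)
    (J : Fin N → Finset (Fin N))
    (hJcard : ∀ i, (J i).card = M)
    (hJopp : ∀ i, ∀ j ∈ J i, A j = 1 - A i) :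
    (1 / (N : ℝ)) *
        ∑ i, ((if A i = 1 then Y i else (1 / (M : ℝ)) * ∑ j ∈ J i, Y j)
          - (if A i = 1 then (1 / (M : ℝ)) * ∑ j ∈ J i, Y j else Y i))
      = (1 / (N : ℝ)) *
        ∑ i, (2 * (A i : ℝ) - 1) *
          (1 + ((Finset.univ.filter fun l => i ∈ J l).card : ℝ) / (M : ℝ)) * Y i := by
  congr 1
  have key : ∀ i : Fin N,
      ((if A i = 1 then Y i else (1 / (M : ℝ)) * ∑ j ∈ J i, Y j)
        - (if A i = 1 then (1 / (M : ℝ)) * ∑ j ∈ J i, Y j else Y i))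
      = (2 * (A i : ℝ) - 1) * Y i
        + ∑ j ∈ J i, ((2 * (A j : ℝ) - 1) / (M : ℝ)) * Y j := by
    intro i
    have hsum : ∑ j ∈ J i, ((2 * (A j : ℝ) - 1) / (M : ℝ)) * Y j
        = -(2 * (A i : ℝ) - 1) * ((1 / (M : ℝ)) * ∑ j ∈ J i, Y j) := by
      rw [Finset.mul_sum, Finset.mul_sum]
      apply Finset.sum_congr rfl
      intro j hj
      have hji := hJopp i j hj
      rcases hA i with h | h <;> rw [h] at hji ⊢ <;> norm_num at hji <;> rw [hji] <;> push_cast <;> ring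
    rw [hsum]
    rcases hA i with h | h <;> simp [h] <;> ring
  rw [Finset.sum_congr rfl (fun i _ => key i), Finset.sum_add_distrib]
  have swap : ∑ i : Fin N, ∑ j ∈ J i, ((2 * (A j : ℝ) - 1) / (M : ℝ)) * Y j
      = ∑ j : Fin N, ((Finset.univ.filter fun l => j ∈ J l).card : ℝ)
          * (((2 * (A j : ℝ) - 1) / (M : ℝ)) * Y j) := by
    have h1 : ∀ i : Fin N, ∑ j ∈ J i, ((2 * (A j : ℝ) - 1) / (M : ℝ)) * Y j
        = ∑ j : Fin N, if j ∈ J i then ((2 * (A j : ℝ) - 1) / (M : ℝ)) * Y j else 0 := by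
      intro i
      rw [Finset.sum_ite_mem]
      congr 1
      simp [Finset.inter_eq_right]
    rw [Finset.sum_congr rfl (fun i _ => h1 i), Finset.sum_comm]
    apply Finset.sum_congr rfl
    intro j _
    rw [Finset.sum_ite, Finset.sum_const, Finset.sum_const_zero, add_zero, nsmul_eq_mul]
  rw [swap, ← Finset.sum_add_distrib]
  apply Finset.sum_congr rfl
  intro i _
  field_simp
end

section
/- With N ≥ 1 units, binary treatments A_i ∈ {0,1}, outcomes Y_i ∈ ℝ, covariates X_i ∈ 𝒳, M ≥ 1 matches per unit drawn from the opposite treatment group, K_M(i) the number of times unit i is used as a match, and ANY two functions μ₀, μ₁ : 𝒳 → ℝ, the matching estimator τ̂_mat := (1/N)·Σ_{i=1}^N (2A_i − 1)·(1 + K_M(i)/M)·Y_i decomposes exactly as τ̂_mat = τ̄ + E_M + B_M, where τ̄ = (1/N)·Σ_i (μ₁(X_i) − μ₀(X_i)), E_M = (1/N)·Σ_i (2A_i − 1)·(1 + K_M(i)/M)·(Y_i − μ_{A_i}(X_i)), and B_M = (1/N)·Σ_i (2A_i − 1)·(1/M)·Σ_{j ∈ 𝒥_M(i)} (μ_{1−A_i}(X_i)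 − μ_{1−A_i}(X_j)). -/
open Finset

/-- Exact decomposition of the simple ATE matching estimator,
`τ̂_mat = τ̄ + E_M + B_M`, for any functions `μ₀, μ₁ : 𝒳 → ℝ`. -/
theorem matching_estimator_ate_decomposition
    {𝒳 : Type*}
    (N M : ℕ) (hN : 1 ≤ N) (hM : 1 ≤ M)
    (A : Fin N → ℕ) (hA : ∀ i, A i = 0 ∨ A i = 1)
    (Y : Fin N → ℝ) (X : Fin N → 𝒳)
    (J : Fin N → Finset (Fin N))
    (hJcard : ∀ i, (J i).card = M)
    (hJopp : ∀ i, ∀ j ∈ J i, A j = 1 - A i)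
    (μ₀ μ₁ : 𝒳 → ℝ) :
    (1 / (N : ℝ)) *
        ∑ i, (2 * (A i : ℝ) - 1) *
          (1 + ((Finset.univ.filter fun l => i ∈ J l).card : ℝ) / (M : ℝ)) * Y i
      = (1 / (N : ℝ)) * ∑ i, (μ₁ (X i) - μ₀ (X i))
        + (1 / (N : ℝ)) *
            ∑ i, (2 * (A i : ℝ) - 1) *
              (1 + ((Finset.univ.filter fun l => i ∈ J l).card : ℝ) / (M : ℝ)) *
              (Y i - (if A i = 1 then μ₁ (X i) else μ₀ (X i)))
        + (1 / (N : ℝ)) *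
            ∑ i, (2 * (A i : ℝ) - 1) *
              ((1 / (M : ℝ)) *
                ∑ j ∈ J i,
                  ((if A i = 1 then μ₀ (X i) else μ₁ (X i))
                    - (if A i = 1 then μ₀ (X j) else μ₁ (X j)))) := by
  classical
  have hM0 : (M : ℝ) ≠ 0 := Nat.cast_ne_zero.mpr (by omega)
  -- abbreviations
  let g : Fin N → ℝ := fun i => 2 * (A i : ℝ) - 1
  let K : Fin N → ℝ := fun i => ((Finset.univ.filter fun l => i ∈ J l).card : ℝ)
  let m : Fin N → ℝ := fun i => if A i = 1 then μ₁ (X i) else μ₀ (X i)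
  let m' : Fin N → ℝ := fun i => if A i = 1 then μ₀ (X i) else μ₁ (X i)
  show (1 / (N : ℝ)) * ∑ i, g i * (1 + K i / (M : ℝ)) * Y i
      = (1 / (N : ℝ)) * ∑ i, (μ₁ (X i) - μ₀ (X i))
        + (1 / (N : ℝ)) * ∑ i, g i * (1 + K i / (M : ℝ)) * (Y i - m i)
        + (1 / (N : ℝ)) * ∑ i, g i * ((1 / (M : ℝ)) * ∑ j ∈ J i, (m' i - (if A i = 1 then μ₀ (X j) else μ₁ (X j))))
  have hgopp : ∀ i, ∀ j ∈ J i, g i = - g j := by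
    intro i j hj
    have hji := hJopp i j hj
    rcases hA i with h | h <;>
      simp only [g, h] at hji ⊢ <;> rw [hji] <;> norm_num
  have hmj : ∀ i, ∀ j ∈ J i, (if A i = 1 then μ₀ (X j) else μ₁ (X j)) = m j := by
    intro i j hj
    have hji := hJopp i j hj
    rcases hA i with h | h <;> rw [h] at hji ⊢ <;> simp [m, hji]
  -- inner B sum
  have hinner : ∀ i, ∑ j ∈ J i, (m' i - (if A i = 1 then μ₀ (X j) else μ₁ (X j)))
      = (M : ℝ) * m' i - ∑ j ∈ J i, m j := by
    intro i
    rw [Finset.sum_sub_distrib]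
    congr 1
    · rw [Finset.sum_const, hJcard i, nsmul_eq_mul]
    · exact Finset.sum_congr rfl (hmj i)
  -- swap sums
  have hswap : ∑ i, g i * ∑ j ∈ J i, m j = ∑ j, K j * (- g j) * m j := by
    have h1 : ∀ i, g i * ∑ j ∈ J i, m j = ∑ j, if j ∈ J i then g i * m j else 0 := by
      intro i
      rw [Finset.mul_sum, ← Finset.sum_filter, Finset.filter_univ_mem]
    simp_rw [h1]
    rw [Finset.sum_comm]
    refine Finset.sum_congr rfl fun j _ => ?_
    rw [← Finset.sum_filter]
    have h2 : ∑ i ∈ Finset.univ.filter (fun i => j ∈ J i), g i * m j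
        = ∑ i ∈ Finset.univ.filter (fun i => j ∈ J i), (- g j) * m j := by
      refine Finset.sum_congr rfl fun i hi => ?_
      rw [hgopp i j (Finset.mem_filter.mp hi).2]
    rw [h2, Finset.sum_const, nsmul_eq_mul]
    ring
  -- B sum value
  have hB : ∑ i, g i * ((1 / (M : ℝ)) * ∑ j ∈ J i, (m' i - (if A i = 1 then μ₀ (X j) else μ₁ (X j))))
      = ∑ i, g i * m' i + (1 / (M : ℝ)) * ∑ j, K j * g j * m j := by
    have e1 : ∀ i, g i * ((1 / (M : ℝ)) * ∑ j ∈ J i, (m' i - (if A i = 1 then μ₀ (X j) else μ₁ (X j))))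
        = g i * m' i - (1 / (M : ℝ)) * (g i * ∑ j ∈ J i, m j) := by
      intro i
      rw [hinner i]
      field_simp
    simp_rw [e1]
    rw [Finset.sum_sub_distrib, ← Finset.mul_sum, hswap]
    have : ∑ j, K j * (- g j) * m j = - ∑ j, K j * g j * m j := by
      rw [← Finset.sum_neg_distrib]
      exact Finset.sum_congr rfl fun j _ => by ring
    rw [this]
    ring
  -- τ̄ term
  have hτ : ∀ i, μ₁ (X i) - μ₀ (X i) = g i * (m i - m' i) := by
    intro i
    rcases hA i with h | h <;> simp [g, m, m', h] <;> ring
  -- assemble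
  have key : ∑ i, g i * (1 + K i / (M : ℝ)) * Y i
      = ∑ i, (μ₁ (X i) - μ₀ (X i))
        + ∑ i, g i * (1 + K i / (M : ℝ)) * (Y i - m i)
        + ∑ i, g i * ((1 / (M : ℝ)) * ∑ j ∈ J i, (m' i - (if A i = 1 then μ₀ (X j) else μ₁ (X j)))) := by
    rw [hB]
    simp_rw [hτ]
    rw [Finset.mul_sum, ← Finset.sum_add_distrib, ← Finset.sum_add_distrib, ← Finset.sum_add_distrib]
    refine Finset.sum_congr rfl fun i _ => ?_
    field_simp
    ring
  rw [key]
  ring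
end

section
/- With N ≥ 1 units, binary treatments A_i ∈ {0,1}, outcomes Y_i ∈ ℝ, covariates X_i ∈ 𝒳, N₁ := #{i : A_i = 1} > 0, M ≥ 1 control matches per treated unit, K_M(i) the number of treated units that use control unit i as a match, and ANY two functions μ₀, μ₁ : 𝒳 → ℝ, the ATT matching estimator τ̂ᵗ_mat := (1/N₁)·Σ_{i=1}^N (A_i − (1 − A_i)·K_M(i)/M)·Y_i decomposes exactly as τ̂ᵗ_mat = τ̄ᵗ + Eᵗ_M + Bᵗ_M, where τ̄ᵗ = (1/N₁)·Σ_i A_i·(μ₁(X_i) − μ₀(X_i)), Eᵗ_M = (1/N₁)·Σ_i (A_i − (1 − A_i)·K_M(i)/M)·(Y_i − μ_{A_i}(X_i)), and Bᵗ_M = (1/N₁)·Σ_i A_i·(1/M)·Σ_{j ∈ 𝒥_M(i)} (μ₀(X_i) − μ₀(X_j)). -/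
open Finset

/-- Exact decomposition of the simple ATT matching estimator,
`τ̂ᵗ_mat = τ̄ᵗ + Eᵗ_M + Bᵗ_M`, for any functions `μ₀, μ₁ : 𝒳 → ℝ`. -/
theorem matching_estimator_att_decomposition
    {𝒳 : Type*}
    (N M : ℕ) (hN : 1 ≤ N) (hM : 1 ≤ M)
    (A : Fin N → ℕ) (hA : ∀ i, A i = 0 ∨ A i = 1)
    (Y : Fin N → ℝ) (X : Fin N → 𝒳)
    (J : Fin N → Finset (Fin N))
    (hJcard : ∀ i, A i = 1 → (J i).card = M)
    (hJctrl : ∀ i, A i = 1 → ∀ j ∈ J i, A j = 0)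
    (N₁ : ℕ) (hN₁def : N₁ = (Finset.univ.filter fun i => A i = 1).card)
    (hN₁pos : 0 < N₁)
    (μ₀ μ₁ : 𝒳 → ℝ) :
    (1 / (N₁ : ℝ)) *
        ∑ i, ((A i : ℝ)
            - (1 - (A i : ℝ)) *
              ((Finset.univ.filter fun l => A l = 1 ∧ i ∈ J l).card : ℝ) / (M : ℝ)) * Y i
      = (1 / (N₁ : ℝ)) * ∑ i, (A i : ℝ) * (μ₁ (X i) - μ₀ (X i))
        + (1 / (N₁ : ℝ)) *
            ∑ i, ((A i : ℝ)
                - (1 - (A i : ℝ)) *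
                  ((Finset.univ.filter fun l => A l = 1 ∧ i ∈ J l).card : ℝ) / (M : ℝ)) *
              (Y i - (if A i = 1 then μ₁ (X i) else μ₀ (X i)))
        + (1 / (N₁ : ℝ)) *
            ∑ i, (A i : ℝ) *
              ((1 / (M : ℝ)) * ∑ j ∈ J i, (μ₀ (X i) - μ₀ (X j))) := by
  have hMpos : (M : ℝ) ≠ 0 := by positivity
  set K : Fin N → ℕ := fun i => (Finset.univ.filter fun l => A l = 1 ∧ i ∈ J l).card with hK
  have hKi : ∀ i, (K i : ℝ) = ∑ l : Fin N, if A l = 1 ∧ i ∈ J l then (1 : ℝ) else 0 := by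
    intro i
    show (((Finset.univ.filter fun l => A l = 1 ∧ i ∈ J l).card : ℕ) : ℝ) = _
    rw [Finset.card_filter]
    push_cast
    rfl
  -- double counting
  have hswap : ∑ i, (1 - (A i : ℝ)) * (K i : ℝ) * μ₀ (X i)
      = ∑ l, (A l : ℝ) * ∑ j ∈ J l, μ₀ (X j) := by
    have h1 : ∀ i, (1 - (A i : ℝ)) * (K i : ℝ) * μ₀ (X i)
        = ∑ l : Fin N, if A l = 1 ∧ i ∈ J l then μ₀ (X i) else 0 := by
      intro i
      rw [hKi i, Finset.mul_sum, Finset.sum_mul]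
      apply Finset.sum_congr rfl
      intro l _
      split_ifs with h
      · have hAi : A i = 0 := hJctrl l h.1 i h.2
        simp [hAi]
      · simp
    have h2 : ∀ l, (A l : ℝ) * ∑ j ∈ J l, μ₀ (X j)
        = ∑ i : Fin N, if A l = 1 ∧ i ∈ J l then μ₀ (X i) else 0 := by
      intro l
      rcases hA l with h0 | h1
      · simp [h0]
      · simp [h1, Finset.sum_ite_mem]
    calc ∑ i, (1 - (A i : ℝ)) * (K i : ℝ) * μ₀ (X i)
        = ∑ i, ∑ l : Fin N, if A l = 1 ∧ i ∈ J l then μ₀ (X i) else 0 :=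
          Finset.sum_congr rfl fun i _ => h1 i
      _ = ∑ l, ∑ i : Fin N, if A l = 1 ∧ i ∈ J l then μ₀ (X i) else 0 := Finset.sum_comm
      _ = ∑ l, (A l : ℝ) * ∑ j ∈ J l, μ₀ (X j) :=
          Finset.sum_congr rfl fun l _ => (h2 l).symm
  -- pointwise identity for the weight times the regression value
  have hwm : ∑ i, ((A i : ℝ) - (1 - (A i : ℝ)) * (K i : ℝ) / (M : ℝ)) *
        (if A i = 1 then μ₁ (X i) else μ₀ (X i))
      = ∑ i, ((A i : ℝ) * μ₁ (X i) - (1 - (A i : ℝ)) * (K i : ℝ) * μ₀ (X i) / (M : ℝ)) := by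
    apply Finset.sum_congr rfl
    intro i _
    rcases hA i with h0 | h1
    · simp only [h0]
      push_cast
      simp
      ring
    · simp only [h1]
      push_cast
      simp
  -- pointwise identity for the bias term
  have hbias : ∑ i, (A i : ℝ) * ((1 / (M : ℝ)) * ∑ j ∈ J i, (μ₀ (X i) - μ₀ (X j)))
      = ∑ i, ((A i : ℝ) * μ₀ (X i) - (A i : ℝ) * (∑ j ∈ J i, μ₀ (X j)) / (M : ℝ)) := by
    apply Finset.sum_congr rfl
    intro i _
    rcases hA i with h0 | h1
    · simp [h0]
    · rw [Finset.sum_sub_distrib, Finset.sum_const, hJcard i h1]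
      simp only [h1, Nat.cast_one, one_mul, nsmul_eq_mul]
      field_simp
  have hT1 : ∑ i, (A i : ℝ) * (μ₁ (X i) - μ₀ (X i))
      = ∑ i, (A i : ℝ) * μ₁ (X i) - ∑ i, (A i : ℝ) * μ₀ (X i) := by
    rw [← Finset.sum_sub_distrib]
    exact Finset.sum_congr rfl fun i _ => by ring
  have hswap' : ∑ i, (1 - (A i : ℝ)) * (K i : ℝ) * μ₀ (X i) / (M : ℝ)
      = ∑ i, (A i : ℝ) * (∑ j ∈ J i, μ₀ (X j)) / (M : ℝ) := by
    rw [← Finset.sum_div, ← Finset.sum_div, hswap]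
  have hkey : ∑ i, ((A i : ℝ) - (1 - (A i : ℝ)) * (K i : ℝ) / (M : ℝ)) *
        (if A i = 1 then μ₁ (X i) else μ₀ (X i))
      = ∑ i, (A i : ℝ) * (μ₁ (X i) - μ₀ (X i))
        + ∑ i, (A i : ℝ) * ((1 / (M : ℝ)) * ∑ j ∈ J i, (μ₀ (X i) - μ₀ (X j))) := by
    rw [hwm, hbias, hT1, Finset.sum_sub_distrib, Finset.sum_sub_distrib, hswap']
    ring
  have hsub : ∑ i, ((A i : ℝ) - (1 - (A i : ℝ)) * (K i : ℝ) / (M : ℝ)) *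
        (Y i - (if A i = 1 then μ₁ (X i) else μ₀ (X i)))
      = (∑ i, ((A i : ℝ) - (1 - (A i : ℝ)) * (K i : ℝ) / (M : ℝ)) * Y i)
        - ∑ i, ((A i : ℝ) - (1 - (A i : ℝ)) * (K i : ℝ) / (M : ℝ)) *
            (if A i = 1 then μ₁ (X i) else μ₀ (X i)) := by
    rw [← Finset.sum_sub_distrib]
    exact Finset.sum_congr rfl fun i _ => by ring
  rw [← mul_add, ← mul_add]
  congr 1
  rw [hsub, hkey]
  ring
end

section
/- In the clustered matching setup where treatment is assigned at the cluster level (unit i's treatment is A_{c(i)}), with imputed potential outcomes Ŷ_i(A_{c(i)}) = Y_i and Ŷ_i(1−A_{c(i)}) = (1/M)·Σ_{j ∈ 𝒥_M(i)} Y_j, the clustered matching estimator of the average treatment effect satisfies the exact identity (1/N)·Σ_{i=1}^N (Ŷ_i(1) − Ŷ_i(0)) = (1/N)·Σ_{i=1}^N (2A_{c(i)} − 1)·(1 + K_M(i)/M)·Y_i. -/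
open Finset

/-- In the clustered matching setup with cluster-level treatment assignment,
the clustered ATE matching estimator written as the average of imputed contrasts equals
`(1/N)·Σᵢ (2A_{c(i)} − 1)·(1 + K_M(i)/M)·Yᵢ`. -/
theorem clustered_matching_estimator_ate_identity
    (N R M : ℕ) (hN : 1 ≤ N) (hR : 1 ≤ R) (hM : 1 ≤ M)
    (c : Fin N → Fin R)
    (A : Fin R → ℕ) (hA : ∀ r, A r = 0 ∨ A r = 1)
    (Y : Fin N → ℝ)
    (J : Fin N → Finset (Fin N))
    (hJcard : ∀ i, (J i).card = M)
    (hJopp : ∀ i, ∀ j ∈ J i, A (c j) = 1 - A (c i)) :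
    (1 / (N : ℝ)) *
        ∑ i, ((if A (c i) = 1 then Y i else (1 / (M : ℝ)) * ∑ j ∈ J i, Y j)
          - (if A (c i) = 1 then (1 / (M : ℝ)) * ∑ j ∈ J i, Y j else Y i))
      = (1 / (N : ℝ)) *
        ∑ i, (2 * (A (c i) : ℝ) - 1) *
          (1 + ((Finset.univ.filter fun l => i ∈ J l).card : ℝ) / (M : ℝ)) * Y i := by
  congr 1
  have key : ∀ i, ((if A (c i) = 1 then Y i else (1 / (M : ℝ)) * ∑ j ∈ J i, Y j)
          - (if A (c i) = 1 then (1 / (M : ℝ)) * ∑ j ∈ J i, Y j else Y i))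
      = (2 * (A (c i) : ℝ) - 1) * Y i
        - (2 * (A (c i) : ℝ) - 1) * ((1 / (M : ℝ)) * ∑ j ∈ J i, Y j) := by
    intro i
    rcases hA (c i) with h | h <;> simp [h] <;> ring
  simp only [key]
  rw [Finset.sum_sub_distrib]
  have hopp : ∀ j i, j ∈ J i → (2 * (A (c i) : ℝ) - 1) = -(2 * (A (c j) : ℝ) - 1) := by
    intro j i hj
    have h := hJopp i j hj
    rcases hA (c i) with h1 | h1 <;> simp [h1] at h ⊢ <;> simp [h] <;> norm_num
  have swap : ∑ i, (2 * (A (c i) : ℝ) - 1) * ((1 / (M : ℝ)) * ∑ j ∈ J i, Y j)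
      = ∑ j, ∑ i ∈ univ.filter (fun l => j ∈ J l),
          (2 * (A (c i) : ℝ) - 1) * ((1 / (M : ℝ)) * Y j) := by
    simp_rw [Finset.mul_sum]
    exact Finset.sum_comm' (fun i j => by simp)
  rw [swap]
  have inner : ∀ j, ∑ i ∈ univ.filter (fun l => j ∈ J l),
        (2 * (A (c i) : ℝ) - 1) * ((1 / (M : ℝ)) * Y j)
      = ((univ.filter fun l => j ∈ J l).card : ℝ)
          * (-(2 * (A (c j) : ℝ) - 1) * ((1 / (M : ℝ)) * Y j)) := by
    intro j
    rw [Finset.sum_congr rfl (fun i hi => by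
      rw [hopp j i (by simpa using hi)]), Finset.sum_const, nsmul_eq_mul]
  simp_rw [inner]
  rw [← Finset.sum_sub_distrib]
  apply Finset.sum_congr rfl
  intro i _
  have hM' : (M : ℝ) ≠ 0 := by positivity
  field_simp
  ring
end

section
/- In the clustered matching setup where treatment is assigned at the cluster level (unit i's treatment is A_{c(i)}), for ANY two functions μ₀, μ₁ : 𝒮 → ℝ of the covariates S_i, the clustered matching estimator τ̂_mat := (1/N)·Σ_{i=1}^N (2A_{c(i)} − 1)·(1 + K_M(i)/M)·Y_i decomposes exactly as τ̂_mat = τ̄ + E_M + B_M, where τ̄ = (1/N)·Σ_i (μ₁(S_i) − μ₀(S_i)), E_M = (1/N)·Σ_i (2A_{c(i)} − 1)·(1 + K_M(i)/M)·(Y_i − μ_{A_{c(i)}}(S_i)), and B_M = (1/N)·Σ_i (2A_{c(i)} − 1)·(1/M)·Σ_{j ∈ 𝒥_M(i)} (μ_{1−A_{c(i)}}(S_i) − μ_{1−A_{c(i)}}(S_j)). -/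
open Finset

/-- Exact decomposition of the clustered ATE matching estimator,
`τ̂_mat = τ̄ + E_M + B_M`, for any functions `μ₀, μ₁ : 𝒮 → ℝ` of the covariates. -/
theorem clustered_matching_estimator_ate_decomposition
    {𝒮 : Type*}
    (N R M : ℕ) (hN : 1 ≤ N) (hR : 1 ≤ R) (hM : 1 ≤ M)
    (c : Fin N → Fin R)
    (A : Fin R → ℕ) (hA : ∀ r, A r = 0 ∨ A r = 1)
    (Y : Fin N → ℝ) (S : Fin N → 𝒮)
    (J : Fin N → Finset (Fin N))
    (hJcard : ∀ i, (J i).card = M)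
    (hJopp : ∀ i, ∀ j ∈ J i, A (c j) = 1 - A (c i))
    (μ₀ μ₁ : 𝒮 → ℝ) :
    (1 / (N : ℝ)) *
        ∑ i, (2 * (A (c i) : ℝ) - 1) *
          (1 + ((Finset.univ.filter fun l => i ∈ J l).card : ℝ) / (M : ℝ)) * Y i
      = (1 / (N : ℝ)) * ∑ i, (μ₁ (S i) - μ₀ (S i))
        + (1 / (N : ℝ)) *
            ∑ i, (2 * (A (c i) : ℝ) - 1) *
              (1 + ((Finset.univ.filter fun l => i ∈ J l).card : ℝ) / (M : ℝ)) *
              (Y i - (if A (c i) = 1 then μ₁ (S i) else μ₀ (S i)))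
        + (1 / (N : ℝ)) *
            ∑ i, (2 * (A (c i) : ℝ) - 1) *
              ((1 / (M : ℝ)) *
                ∑ j ∈ J i,
                  ((if A (c i) = 1 then μ₀ (S i) else μ₁ (S i))
                    - (if A (c i) = 1 then μ₀ (S j) else μ₁ (S j)))) := by
  have hM0 : (M : ℝ) ≠ 0 := Nat.cast_ne_zero.mpr (by omega)
  -- abbreviations (as plain functions, used only in auxiliary statements)
  -- g j = ε j * m j
  -- swap lemma
  have swap : ∀ f : Fin N → ℝ,
      ∑ i : Fin N, ∑ j ∈ J i, f j
        = ∑ j : Fin N, ((Finset.univ.filter fun l => j ∈ J l).card : ℝ) * f j := by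
    intro f
    calc ∑ i : Fin N, ∑ j ∈ J i, f j
        = ∑ i : Fin N, ∑ j : Fin N, if j ∈ J i then f j else 0 := by
          refine Finset.sum_congr rfl fun i _ => ?_
          rw [← Finset.sum_filter]
          congr 1
          ext j
          simp
      _ = ∑ j : Fin N, ∑ i : Fin N, if j ∈ J i then f j else 0 := Finset.sum_comm
      _ = ∑ j : Fin N, ((Finset.univ.filter fun l => j ∈ J l).card : ℝ) * f j := by
          refine Finset.sum_congr rfl fun j _ => ?_
          rw [← Finset.sum_filter, Finset.sum_const, nsmul_eq_mul]
  -- rewrite the bias term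
  have hB : ∀ i : Fin N,
      (2 * (A (c i) : ℝ) - 1) *
        ((1 / (M : ℝ)) * ∑ j ∈ J i,
          ((if A (c i) = 1 then μ₀ (S i) else μ₁ (S i))
            - (if A (c i) = 1 then μ₀ (S j) else μ₁ (S j))))
      = (2 * (A (c i) : ℝ) - 1) * (if A (c i) = 1 then μ₀ (S i) else μ₁ (S i))
        + (1 / (M : ℝ)) * ∑ j ∈ J i,
            (2 * (A (c j) : ℝ) - 1) * (if A (c j) = 1 then μ₁ (S j) else μ₀ (S j)) := by
    intro i
    have h1 : ∀ j ∈ J i,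
        (2 * (A (c i) : ℝ) - 1) *
          ((if A (c i) = 1 then μ₀ (S i) else μ₁ (S i))
            - (if A (c i) = 1 then μ₀ (S j) else μ₁ (S j)))
        = (2 * (A (c i) : ℝ) - 1) * (if A (c i) = 1 then μ₀ (S i) else μ₁ (S i))
          + (2 * (A (c j) : ℝ) - 1) * (if A (c j) = 1 then μ₁ (S j) else μ₀ (S j)) := by
      intro j hj
      have hj' := hJopp i j hj
      rcases hA (c i) with h | h <;> rw [h] at hj' ⊢ <;> simp at hj' <;>
        rw [hj'] <;> norm_num <;> ring
    calc (2 * (A (c i) : ℝ) - 1) *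
          ((1 / (M : ℝ)) * ∑ j ∈ J i,
            ((if A (c i) = 1 then μ₀ (S i) else μ₁ (S i))
              - (if A (c i) = 1 then μ₀ (S j) else μ₁ (S j))))
        = (1 / (M : ℝ)) * ∑ j ∈ J i,
            (2 * (A (c i) : ℝ) - 1) *
              ((if A (c i) = 1 then μ₀ (S i) else μ₁ (S i))
                - (if A (c i) = 1 then μ₀ (S j) else μ₁ (S j))) := by
          rw [Finset.mul_sum, Finset.mul_sum, Finset.mul_sum]
          exact Finset.sum_congr rfl fun j _ => by ring
      _ = (1 / (M : ℝ)) * ∑ j ∈ J i,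
            ((2 * (A (c i) : ℝ) - 1) * (if A (c i) = 1 then μ₀ (S i) else μ₁ (S i))
              + (2 * (A (c j) : ℝ) - 1) * (if A (c j) = 1 then μ₁ (S j) else μ₀ (S j))) := by
          rw [Finset.sum_congr rfl h1]
      _ = (1 / (M : ℝ)) *
            ((M : ℝ) * ((2 * (A (c i) : ℝ) - 1) * (if A (c i) = 1 then μ₀ (S i) else μ₁ (S i)))
              + ∑ j ∈ J i,
                (2 * (A (c j) : ℝ) - 1) * (if A (c j) = 1 then μ₁ (S j) else μ₀ (S j))) := by
          rw [Finset.sum_add_distrib, Finset.sum_const, hJcard, nsmul_eq_mul]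
      _ = _ := by field_simp
  rw [← mul_add, ← mul_add]
  congr 1
  rw [Finset.sum_congr rfl fun i _ => hB i, Finset.sum_add_distrib, ← Finset.mul_sum,
    swap fun j => (2 * (A (c j) : ℝ) - 1) * (if A (c j) = 1 then μ₁ (S j) else μ₀ (S j)),
    Finset.mul_sum, ← Finset.sum_add_distrib, ← Finset.sum_add_distrib, ← Finset.sum_add_distrib]
  refine Finset.sum_congr rfl fun i _ => ?_
  rcases hA (c i) with h | h <;> rw [h] <;> norm_num <;> ring
end

section
/- In the clustered ATT matching setup where treatment is assigned at the cluster level and only treated units are matched to control units, for ANY two functions μ₀, μ₁ : 𝒮 → ℝ of the covariates S_i, the clustered ATT matching estimator τ̂ᵗ_mat := (1/N₁)·Σ_{i=1}^N (A_{c(i)} − (1 − A_{c(i)})·K_M(i)/M)·Y_i decomposes exactly as τ̂ᵗ_mat = τ̄ᵗ + Eᵗ_M + Bᵗ_M, where τ̄ᵗ = (1/N₁)·Σ_i A_{c(i)}·(μ₁(S_i) − μ₀(S_i)), Eᵗ_M = (1/N₁)·Σ_i (A_{c(i)} − (1 − A_{c(i)})·K_M(i)/M)·(Y_i − μ_{A_{c(i)}}(S_i)),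 and Bᵗ_M = (1/N₁)·Σ_i A_{c(i)}·(1/M)·Σ_{j ∈ 𝒥_M(i)} (μ₀(S_i) − μ₀(S_j)). -/
open Finset

/-- Exact decomposition of the clustered ATT matching estimator,
`τ̂ᵗ_mat = τ̄ᵗ + Eᵗ_M + Bᵗ_M`, for any functions `μ₀, μ₁ : 𝒮 → ℝ` of the covariates. -/
theorem clustered_matching_estimator_att_decomposition
    {𝒮 : Type*}
    (N R M : ℕ) (hN : 1 ≤ N) (hR : 1 ≤ R) (hM : 1 ≤ M)
    (c : Fin N → Fin R)
    (A : Fin R → ℕ) (hA : ∀ r, A r = 0 ∨ A r = 1)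
    (Y : Fin N → ℝ) (S : Fin N → 𝒮)
    (J : Fin N → Finset (Fin N))
    (hJcard : ∀ i, A (c i) = 1 → (J i).card = M)
    (hJctrl : ∀ i, A (c i) = 1 → ∀ j ∈ J i, A (c j) = 0)
    (N₁ : ℕ) (hN₁def : N₁ = (Finset.univ.filter fun i => A (c i) = 1).card)
    (hN₁pos : 0 < N₁)
    (μ₀ μ₁ : 𝒮 → ℝ) :
    (1 / (N₁ : ℝ)) *
        ∑ i, ((A (c i) : ℝ)
            - (1 - (A (c i) : ℝ)) *
              ((Finset.univ.filter fun l => A (c l) = 1 ∧ i ∈ J l).card : ℝ) / (M : ℝ)) * Y i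
      = (1 / (N₁ : ℝ)) * ∑ i, (A (c i) : ℝ) * (μ₁ (S i) - μ₀ (S i))
        + (1 / (N₁ : ℝ)) *
            ∑ i, ((A (c i) : ℝ)
                - (1 - (A (c i) : ℝ)) *
                  ((Finset.univ.filter fun l => A (c l) = 1 ∧ i ∈ J l).card : ℝ) / (M : ℝ)) *
              (Y i - (if A (c i) = 1 then μ₁ (S i) else μ₀ (S i)))
        + (1 / (N₁ : ℝ)) *
            ∑ i, (A (c i) : ℝ) *
              ((1 / (M : ℝ)) * ∑ j ∈ J i, (μ₀ (S i) - μ₀ (S j))) := by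
  have hM' : (M : ℝ) ≠ 0 := by positivity
  set K : Fin N → ℕ := fun i => (Finset.univ.filter fun l => A (c l) = 1 ∧ i ∈ J l).card with hK
  -- the key swap-of-sums identity
  have key : ∑ i, (if A (c i) = 1 then (0:ℝ) else (K i : ℝ) * μ₀ (S i))
      = ∑ i, (if A (c i) = 1 then ∑ j ∈ J i, μ₀ (S j) else 0) := by
    have h1 : ∀ i : Fin N, (if A (c i) = 1 then (0:ℝ) else (K i : ℝ) * μ₀ (S i))
        = ∑ l, (if A (c l) = 1 ∧ i ∈ J l then μ₀ (S i) else 0) := by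
      intro i
      rcases hA (c i) with h | h
      · rw [if_neg (by omega), hK]
        simp only [Finset.card_filter]
        push_cast
        rw [Finset.sum_mul]
        refine Finset.sum_congr rfl fun l _ => ?_
        split <;> simp
      · have hz : ∀ l : Fin N, ¬ (A (c l) = 1 ∧ i ∈ J l) := by
          intro l hl
          have := hJctrl l hl.1 i hl.2
          omega
        simp [h, hz]
    simp_rw [h1]
    rw [Finset.sum_comm]
    refine Finset.sum_congr rfl fun l _ => ?_
    by_cases hl : A (c l) = 1
    · simp only [hl, true_and, if_pos]
      rw [Finset.sum_ite_mem, Finset.univ_inter]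
    · rw [if_neg hl]
      exact Finset.sum_eq_zero fun i _ => by rw [if_neg (by tauto)]
  -- pointwise evaluation of weights times regression function
  have e1 : ∀ i : Fin N,
      ((A (c i) : ℝ) - (1 - (A (c i) : ℝ)) * (K i : ℝ) / (M : ℝ)) *
          (if A (c i) = 1 then μ₁ (S i) else μ₀ (S i))
        = (if A (c i) = 1 then μ₁ (S i) else 0)
          - (1 / (M : ℝ)) * (if A (c i) = 1 then (0:ℝ) else (K i : ℝ) * μ₀ (S i)) := by
    intro i
    rcases hA (c i) with h | h
    · rw [if_neg (by omega), if_neg (by omega), if_neg (by omega)]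
      rw [h]; push_cast; ring
    · rw [if_pos h, if_pos h, if_pos h, h]; push_cast; ring
  have e2 : ∀ i : Fin N,
      (A (c i) : ℝ) * (μ₁ (S i) - μ₀ (S i))
        + (A (c i) : ℝ) * ((1 / (M : ℝ)) * ∑ j ∈ J i, (μ₀ (S i) - μ₀ (S j)))
        = (if A (c i) = 1 then μ₁ (S i) else 0)
          - (1 / (M : ℝ)) * (if A (c i) = 1 then ∑ j ∈ J i, μ₀ (S j) else 0) := by
    intro i
    rcases hA (c i) with h | h
    · rw [if_neg (by omega), if_neg (by omega), h]; push_cast; ring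
    · rw [if_pos h, if_pos h, h]
      have hsum : ∑ j ∈ J i, (μ₀ (S i) - μ₀ (S j))
          = (M : ℝ) * μ₀ (S i) - ∑ j ∈ J i, μ₀ (S j) := by
        rw [Finset.sum_sub_distrib, Finset.sum_const, hJcard i h]
        push_cast; ring
      rw [hsum]
      push_cast
      field_simp
      ring
  -- main sum identity
  have main : ∑ i, ((A (c i) : ℝ) - (1 - (A (c i) : ℝ)) * (K i : ℝ) / (M : ℝ)) * Y i
      = ∑ i, (A (c i) : ℝ) * (μ₁ (S i) - μ₀ (S i))
        + ∑ i, ((A (c i) : ℝ) - (1 - (A (c i) : ℝ)) * (K i : ℝ) / (M : ℝ)) *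
              (Y i - (if A (c i) = 1 then μ₁ (S i) else μ₀ (S i)))
        + ∑ i, (A (c i) : ℝ) * ((1 / (M : ℝ)) * ∑ j ∈ J i, (μ₀ (S i) - μ₀ (S j))) := by
    have expand : ∑ i, ((A (c i) : ℝ) - (1 - (A (c i) : ℝ)) * (K i : ℝ) / (M : ℝ)) * Y i
        - ∑ i, ((A (c i) : ℝ) - (1 - (A (c i) : ℝ)) * (K i : ℝ) / (M : ℝ)) *
              (Y i - (if A (c i) = 1 then μ₁ (S i) else μ₀ (S i)))
        = ∑ i, ((A (c i) : ℝ) - (1 - (A (c i) : ℝ)) * (K i : ℝ) / (M : ℝ)) *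
              (if A (c i) = 1 then μ₁ (S i) else μ₀ (S i)) := by
      rw [← Finset.sum_sub_distrib]
      exact Finset.sum_congr rfl fun i _ => by ring
    have rhs : ∑ i, (A (c i) : ℝ) * (μ₁ (S i) - μ₀ (S i))
        + ∑ i, (A (c i) : ℝ) * ((1 / (M : ℝ)) * ∑ j ∈ J i, (μ₀ (S i) - μ₀ (S j)))
        = ∑ i, ((A (c i) : ℝ) - (1 - (A (c i) : ℝ)) * (K i : ℝ) / (M : ℝ)) *
              (if A (c i) = 1 then μ₁ (S i) else μ₀ (S i)) := by
      rw [← Finset.sum_add_distrib]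
      simp_rw [e1, e2]
      rw [Finset.sum_sub_distrib, Finset.sum_sub_distrib, ← Finset.mul_sum,
        ← Finset.mul_sum, key]
    linarith [expand, rhs]
  rw [main]; ring
end

section
/- With N ≥ 1 units, binary treatments A_i ∈ {0,1}, outcomes Y_i ∈ ℝ, covariates X_i ∈ 𝒳, M ≥ 1 matches per unit drawn from the opposite treatment group, K_M(i) the number of times unit i is used as a match, and ANY two functions μ̂₀, μ̂₁ : 𝒳 → ℝ, the bias-corrected matching estimator τ̂ := τ̂_mat − B̂_M, where τ̂_mat = (1/N)·Σ_i (2A_i − 1)·(1 + K_M(i)/M)·Y_i and B̂_M = (1/N)·Σ_i (2A_i − 1)·(1/M)·Σ_{j ∈ 𝒥_M(i)} (μ̂_{1−A_i}(X_i) − μ̂_{1−A_i}(X_j)), admits the exact linear representation τ̂ = (1/N)·Σ_{i=1}^N τ̂_i with τ̂_i := (μ̂₁(X_i) − μ̂₀(X_i)) + (2A_i − 1)·(1 + K_M(i)/M)·(Y_i − μ̂_{A_i}(X_i)). -/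
open Finset

/-- The bias-corrected ATE matching estimator `τ̂ = τ̂_mat − B̂_M` admits the
exact linear representation `τ̂ = (1/N)·Σᵢ τ̂ᵢ` with
`τ̂ᵢ = (μhat₁(Xᵢ) − μhat₀(Xᵢ)) + (2Aᵢ − 1)·(1 + K_M(i)/M)·(Yᵢ − μhat_{Aᵢ}(Xᵢ))`. -/
theorem bias_corrected_matching_estimator_linear_form
    {𝒳 : Type*}
    (N M : ℕ) (hN : 1 ≤ N) (hM : 1 ≤ M)
    (A : Fin N → ℕ) (hA : ∀ i, A i = 0 ∨ A i = 1)
    (Y : Fin N → ℝ) (X : Fin N → 𝒳)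
    (J : Fin N → Finset (Fin N))
    (hJcard : ∀ i, (J i).card = M)
    (hJopp : ∀ i, ∀ j ∈ J i, A j = 1 - A i)
    (μhat₀ μhat₁ : 𝒳 → ℝ) :
    (1 / (N : ℝ)) *
        ∑ i, (2 * (A i : ℝ) - 1) *
          (1 + ((Finset.univ.filter fun l => i ∈ J l).card : ℝ) / (M : ℝ)) * Y i
      - (1 / (N : ℝ)) *
          ∑ i, (2 * (A i : ℝ) - 1) *
            ((1 / (M : ℝ)) *
              ∑ j ∈ J i,
                ((if A i = 1 then μhat₀ (X i) else μhat₁ (X i))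
                  - (if A i = 1 then μhat₀ (X j) else μhat₁ (X j))))
      = (1 / (N : ℝ)) *
          ∑ i, ((μhat₁ (X i) - μhat₀ (X i))
            + (2 * (A i : ℝ) - 1) *
              (1 + ((Finset.univ.filter fun l => i ∈ J l).card : ℝ) / (M : ℝ)) *
              (Y i - (if A i = 1 then μhat₁ (X i) else μhat₀ (X i)))) := by
  have hM0 : (M : ℝ) ≠ 0 := by
    have : 0 < M := hM
    exact_mod_cast this.ne'
  set s : Fin N → ℝ := fun i => 2 * (A i : ℝ) - 1 with hs
  set a : Fin N → ℝ := fun i => if A i = 1 then μhat₁ (X i) else μhat₀ (X i) with ha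
  set b : Fin N → ℝ := fun i => if A i = 1 then μhat₀ (X i) else μhat₁ (X i) with hb
  set K : Fin N → ℝ := fun i => ((Finset.univ.filter fun l => i ∈ J l).card : ℝ) with hK
  -- opposite group: s j = - s i for j ∈ J i
  have hso : ∀ i : Fin N, ∀ j ∈ J i, s j = -s i := by
    intro i j hj
    have hji := hJopp i j hj
    rcases hA i with h | h <;> simp [hs, hji, h] <;> norm_num
  -- inner matched term equals a j
  have hbb : ∀ i : Fin N, ∀ j ∈ J i,
      (if A i = 1 then μhat₀ (X j) else μhat₁ (X j)) = a j := by
    intro i j hj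
    have hji := hJopp i j hj
    rcases hA i with h | h <;> simp [ha, hji, h]
  -- rewrite the bias-correction inner sum
  have hinner : ∀ i : Fin N,
      ∑ j ∈ J i, (b i - (if A i = 1 then μhat₀ (X j) else μhat₁ (X j)))
        = (M : ℝ) * b i - ∑ j ∈ J i, a j := by
    intro i
    rw [Finset.sum_sub_distrib, Finset.sum_const, hJcard,
      Finset.sum_congr rfl (hbb i)]
    push_cast
    ring
  -- swap the double sum
  have hswap : ∑ i, ∑ j ∈ J i, (s i * a j) = ∑ j, K j * (-(s j) * a j) := by
    have h1 : ∀ i : Fin N, ∑ j ∈ J i, (s i * a j)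
        = ∑ j, if j ∈ J i then s i * a j else 0 := by
      intro i
      rw [Finset.sum_ite_mem, Finset.univ_inter]
    simp_rw [h1]
    rw [Finset.sum_comm]
    refine Finset.sum_congr rfl fun j _ => ?_
    rw [← Finset.sum_filter]
    have h2 : ∀ i ∈ (Finset.univ.filter fun l => j ∈ J l), s i * a j = -(s j) * a j := by
      intro i hi
      simp only [Finset.mem_filter] at hi
      have := hso i j hi.2
      rw [show s i = -s j by linarith]
    rw [Finset.sum_congr rfl h2, Finset.sum_const, hK, nsmul_eq_mul]
  -- main computation
  rw [← mul_sub]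
  congr 1
  have hS2 : ∑ i, s i * ((1 / (M : ℝ)) *
      ∑ j ∈ J i, (b i - (if A i = 1 then μhat₀ (X j) else μhat₁ (X j))))
      = ∑ i, s i * b i - (1 / (M : ℝ)) * ∑ j, K j * (-(s j) * a j) := by
    rw [← hswap, Finset.mul_sum, ← Finset.sum_sub_distrib]
    refine Finset.sum_congr rfl fun i _ => ?_
    rw [hinner i, ← Finset.mul_sum]
    field_simp
  rw [hS2]
  rw [show (∑ i, s i * (1 + K i / (M:ℝ)) * Y i) - (∑ i, s i * b i
      - (1 / (M : ℝ)) * ∑ j, K j * (-(s j) * a j))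
    = ∑ i, (s i * (1 + K i / (M:ℝ)) * Y i - s i * b i
        + (1 / (M : ℝ)) * (K i * (-(s i) * a i))) by
      rw [Finset.sum_add_distrib, Finset.sum_sub_distrib, ← Finset.mul_sum]; ring]
  refine Finset.sum_congr rfl fun i _ => ?_
  have hab : s i * (a i - b i) = μhat₁ (X i) - μhat₀ (X i) := by
    rcases hA i with h | h <;> simp [hs, ha, hb, h] <;> ring
  rw [← hab]
  field_simp
  ring
end

section
/- With N ≥ 1 units, binary treatments A_i ∈ {0,1}, outcomes Y_i ∈ ℝ, covariates X_i ∈ 𝒳, M ≥ 1 matches per unit drawn from the opposite treatment group, K_M(i) the number of times unit i is used as a match, and ANY two functions μ̂₀, μ̂₁ : 𝒳 → ℝ, the bias-corrected matching estimator equals the average of regression-adjusted imputed contrasts: τ̂_mat − B̂_M = (1/N)·Σ_{i=1}^N (Ỹ_i(1) − Ỹ_i(0)), where τ̂_mat = (1/N)·Σ_i (2A_i − 1)·(1 + K_M(i)/M)·Y_i, B̂_M = (1/N)·Σ_i (2A_i − 1)·(1/M)·Σ_{j ∈ 𝒥_M(i)} (μ̂_{1−A_i}(X_i) − μ̂_{1−A_i}(X_j)),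 and the regression-adjusted imputations are Ỹ_i(A_i) = Y_i and Ỹ_i(1−A_i) = (1/M)·Σ_{j ∈ 𝒥_M(i)} ( Y_j + μ̂_{1−A_i}(X_i) − μ̂_{1−A_i}(X_j) ). -/
open Finset

/-- The bias-corrected matching estimator `τ̂_mat − B̂_M` equals the average of
regression-adjusted imputed contrasts `Ỹᵢ(1) − Ỹᵢ(0)`, where `Ỹᵢ(Aᵢ) = Yᵢ` and
`Ỹᵢ(1−Aᵢ) = (1/M)·Σ_{j ∈ 𝒥_M(i)} (Yⱼ + μ̂_{1−Aᵢ}(Xᵢ) − μ̂_{1−Aᵢ}(Xⱼ))`. -/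
theorem bias_corrected_matching_estimator_regression_adjusted_form
    {𝒳 : Type*}
    (N M : ℕ) (hN : 1 ≤ N) (hM : 1 ≤ M)
    (A : Fin N → ℕ) (hA : ∀ i, A i = 0 ∨ A i = 1)
    (Y : Fin N → ℝ) (X : Fin N → 𝒳)
    (J : Fin N → Finset (Fin N))
    (hJcard : ∀ i, (J i).card = M)
    (hJopp : ∀ i, ∀ j ∈ J i, A j = 1 - A i)
    (μhat₀ μhat₁ : 𝒳 → ℝ) :
    (1 / (N : ℝ)) *
        ∑ i, (2 * (A i : ℝ) - 1) *
          (1 + ((Finset.univ.filter fun l => i ∈ J l).card : ℝ) / (M : ℝ)) * Y i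
      - (1 / (N : ℝ)) *
          ∑ i, (2 * (A i : ℝ) - 1) *
            ((1 / (M : ℝ)) *
              ∑ j ∈ J i,
                ((if A i = 1 then μhat₀ (X i) else μhat₁ (X i))
                  - (if A i = 1 then μhat₀ (X j) else μhat₁ (X j))))
      = (1 / (N : ℝ)) *
          ∑ i,
            ((if A i = 1 then Y i
              else (1 / (M : ℝ)) *
                ∑ j ∈ J i, (Y j + μhat₁ (X i) - μhat₁ (X j)))
            - (if A i = 1 then
                (1 / (M : ℝ)) *
                  ∑ j ∈ J i, (Y j + μhat₀ (X i) - μhat₀ (X j))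
              else Y i)) := by
  rw [← mul_sub, ← sub_eq_zero, ← mul_sub, ← sum_sub_distrib, ← sum_sub_distrib]
  -- key swap identity
  have hswap : ∀ g : Fin N → ℝ,
      ∑ i, g i * ((Finset.univ.filter fun l => i ∈ J l).card : ℝ)
        = ∑ l, ∑ i ∈ J l, g i := by
    intro g
    have : ∀ i : Fin N, ((Finset.univ.filter fun l => i ∈ J l).card : ℝ)
        = ∑ l : Fin N, if i ∈ J l then (1:ℝ) else 0 := by
      intro i
      rw [card_filter]
      push_cast
      rfl
    simp_rw [this, mul_sum, mul_ite, mul_one, mul_zero]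
    rw [Finset.sum_comm]
    congr 1
    ext l
    rw [Finset.sum_ite_mem, univ_inter]
  have hMpos : (M:ℝ) ≠ 0 := by positivity
  have hkey : ∑ i, (2 * (A i : ℝ) - 1) * Y i / M *
        ((Finset.univ.filter fun l => i ∈ J l).card : ℝ)
      = ∑ l, (1 - 2 * (A l : ℝ)) * ((1/(M:ℝ)) * ∑ j ∈ J l, Y j) := by
    rw [hswap]
    refine Finset.sum_congr rfl fun l _ => ?_
    rw [mul_sum, mul_sum]
    refine Finset.sum_congr rfl fun j hj => ?_
    have hAj := hJopp l j hj
    have : (2 * (A j : ℝ) - 1) = (1 - 2 * (A l : ℝ)) := by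
      rcases hA l with h | h <;> rw [h] at hAj ⊢ <;> simp [hAj] <;> ring
    rw [this]; ring
  have expand : ∀ i : Fin N,
      (2 * (A i : ℝ) - 1) *
          (1 + ((Finset.univ.filter fun l => i ∈ J l).card : ℝ) / (M : ℝ)) * Y i
        - (2 * (A i : ℝ) - 1) *
            ((1 / (M : ℝ)) *
              ∑ j ∈ J i,
                ((if A i = 1 then μhat₀ (X i) else μhat₁ (X i))
                  - (if A i = 1 then μhat₀ (X j) else μhat₁ (X j))))
        - ((if A i = 1 then Y i
              else (1 / (M : ℝ)) *
                ∑ j ∈ J i, (Y j + μhat₁ (X i) - μhat₁ (X j)))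
            - (if A i = 1 then
                (1 / (M : ℝ)) *
                  ∑ j ∈ J i, (Y j + μhat₀ (X i) - μhat₀ (X j))
              else Y i))
      = (2 * (A i : ℝ) - 1) * Y i / M *
          ((Finset.univ.filter fun l => i ∈ J l).card : ℝ)
        - (1 - 2 * (A i : ℝ)) * ((1/(M:ℝ)) * ∑ j ∈ J i, Y j) := by
    intro i
    rcases hA i with h | h <;> simp only [h] <;> norm_num <;>
      simp only [Finset.sum_add_distrib, Finset.sum_sub_distrib, Finset.sum_const,
        hJcard, nsmul_eq_mul] <;> ring
  rw [Finset.sum_congr rfl (fun i _ => expand i), sum_sub_distrib, hkey, sub_self,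
    mul_zero]
end
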